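/- Let $\sigma > 0$, $\alpha,\beta \in \mathbb{C}\setminus\{0\}$, and let $(p_n)_{n\geq 0}$ be the monic polynomial sequence satisfying $z p_n(z) = p_{n+1}(z) + ((\alpha+\beta)n + \sigma/\alpha)p_n(z) + (\sigma n + \alpha\beta n(n-1))p_{n-1}(z)$. Let $\Phi: \mathcal{P}(\mathbb{C}) \to \mathbb{C}$ be the linear functional with $\Phi(1)=1$ and $\Phi(p_n)=0$ for $n\geq 1$. Then $\Phi(z^n) = \sum_{k=1}^n (\alpha-\beta)^{n-k} S(n,k)\,(\sigma/\alpha \mid -\beta)_k$. -/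

import Mathlib

open Polynomial Finset

private noncomputable def T (σ : ℝ) (α β : ℂ) (k m : ℕ) : ℂ :=
  (k.choose m : ℂ) * ∏ j ∈ Finset.Ico m k, ((σ:ℂ)/α + j*β)

private lemma T_zero (σ : ℝ) (α β : ℂ) {k m : ℕ} (h : k < m) : T σ α β k m = 0 := by
  simp [T, Nat.choose_eq_zero_of_lt h]

private lemma t_rec (σ : ℝ) (α β : ℂ) (hα : α ≠ 0) (k m : ℕ) :
    T σ α β (k+1) m =
      (if m = 0 then 0 else T σ α β k (m-1))
      + T σ α β k m * (((α+β)*(m:ℂ) + (σ:ℂ)/α) - (k:ℂ)*(α-β))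
      + T σ α β k (m+1) * ((σ:ℂ) * ((m+1 : ℕ):ℂ) + α*β*((m+1:ℕ):ℂ)*(((m+1:ℕ):ℂ) - 1)) := by
  have hσα : α * ((σ:ℂ)/α) = (σ:ℂ) := by field_simp
  rcases Nat.eq_zero_or_pos m with hm | hm
  · subst hm
    simp only [if_pos rfl]
    rcases Nat.eq_zero_or_pos k with hk | hk
    · subst hk
      simp [T]
    · unfold T
      rw [Finset.prod_Ico_succ_top (Nat.zero_le k)]
      rw [Finset.prod_eq_prod_Ico_succ_bot hk]
      push_cast [Nat.choose_one_right, Nat.choose_zero_right]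
      linear_combination ((k:ℂ) * ∏ j ∈ Finset.Ico 1 k, ((σ:ℂ)/α + j*β)) * hσα
  · obtain ⟨m', rfl⟩ := Nat.exists_eq_succ_of_ne_zero (Nat.pos_iff_ne_zero.mp hm)
    simp only [Nat.succ_eq_add_one, if_neg (Nat.succ_ne_zero m'), Nat.succ_sub_one]
    rcases lt_trichotomy (m'+1) k with hlt | heq | hgt
    · -- main case m'+1 < k
      have hle1 : m' ≤ k := le_of_lt (lt_trans (Nat.lt_succ_self m') hlt)
      have hle2 : m' + 1 ≤ k := le_of_lt hlt
      have h1 : ∏ j ∈ Finset.Ico (m'+1) (k+1), ((σ:ℂ)/α + j*β)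
          = (∏ j ∈ Finset.Ico (m'+1) k, ((σ:ℂ)/α + j*β)) * ((σ:ℂ)/α + k*β) :=
        Finset.prod_Ico_succ_top (le_of_lt hlt) _
      have h2 : ∏ j ∈ Finset.Ico m' k, ((σ:ℂ)/α + j*β)
          = ((σ:ℂ)/α + m'*β) * ∏ j ∈ Finset.Ico (m'+1) k, ((σ:ℂ)/α + j*β) :=
        Finset.prod_eq_prod_Ico_succ_bot (lt_trans (Nat.lt_succ_self m') hlt) _
      have h3 : ∏ j ∈ Finset.Ico (m'+1) k, ((σ:ℂ)/α + j*β)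
          = ((σ:ℂ)/α + ((m':ℂ)+1)*β) * ∏ j ∈ Finset.Ico (m'+2) k, ((σ:ℂ)/α + j*β) := by
        rw [Finset.prod_eq_prod_Ico_succ_bot hlt]; push_cast; ring
      have r1 : (((k+1).choose (m'+1) : ℕ) : ℂ) = (k.choose m' : ℂ) + (k.choose (m'+1) : ℂ) := by
        rw [Nat.choose_succ_succ]; push_cast; ring
      have r2 : (k.choose (m'+1) : ℂ) * ((m':ℂ)+1) = (k.choose m' : ℂ) * ((k:ℂ) - m') := by
        rw [← Nat.cast_sub hle1]
        exact_mod_cast Nat.choose_succ_right_eq k m'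
      have r3 : (k.choose (m'+2) : ℂ) * ((m':ℂ)+2) = (k.choose (m'+1) : ℂ) * ((k:ℂ) - ((m':ℂ)+1)) := by
        have : ((k:ℂ) - ((m':ℂ)+1)) = ((k - (m'+1) : ℕ) : ℂ) := by
          rw [Nat.cast_sub hle2]; push_cast; ring
        rw [this]
        exact_mod_cast Nat.choose_succ_right_eq k (m'+1)
      unfold T
      rw [h1, h2, h3]
      push_cast
      linear_combination
        ((((σ:ℂ)/α) + ((k:ℂ))*β)*((((σ:ℂ)/α) + ((m':ℂ)+1)*β))*(∏ j ∈ Finset.Ico (m'+2) k, ((σ:ℂ)/α + j*β))) * r1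
        + (-β*((((σ:ℂ)/α) + ((m':ℂ)+1)*β))*(∏ j ∈ Finset.Ico (m'+2) k, ((σ:ℂ)/α + j*β))) * r2
        + (-(∏ j ∈ Finset.Ico (m'+2) k, ((σ:ℂ)/α + j*β))*((σ:ℂ)+α*β*((m':ℂ)+1))) * r3
        + ((∏ j ∈ Finset.Ico (m'+2) k, ((σ:ℂ)/α + j*β))*(k.choose (m'+1) : ℂ)*((k:ℂ)-((m':ℂ)+1))) * hσα
    · -- m'+1 = k
      subst heq
      unfold T
      rw [Finset.prod_Ico_succ_top (le_refl (m'+1)),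
        Finset.prod_eq_prod_Ico_succ_bot (Nat.lt_succ_self m'),
        Nat.choose_eq_zero_of_lt (Nat.lt_succ_self (m'+1))]
      simp only [Finset.Ico_self, Finset.prod_empty]
      push_cast [Nat.choose_succ_self_right, Nat.choose_self]
      ring
    · -- k < m'+1
      rcases eq_or_lt_of_le (Nat.lt_succ_iff.mp hgt) with heq2 | hlt2
      · -- k = m'
        subst heq2
        rw [T_zero σ α β (show k < k + 1 by omega), T_zero σ α β (show k < k + 1 + 1 by omega)]
        simp [T, Finset.Ico_self]
      · -- k < m'
        rw [T_zero σ α β (show k + 1 < m' + 1 by omega), T_zero σ α β (show k < m' by omega),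
          T_zero σ α β (show k < m' + 1 by omega), T_zero σ α β (show k < m' + 1 + 1 by omega)]
        simp

private lemma expand_q (σ : ℝ) (α β : ℂ) (hα : α ≠ 0)
    (p : ℕ → Polynomial ℂ) (hp0 : p 0 = 1)
    (hrec : ∀ n : ℕ, Polynomial.X * p n =
      p (n + 1) + Polynomial.C ((α + β) * n + σ / α) * p n
        + Polynomial.C (σ * n + α * β * n * (n - 1)) * (if n = 0 then 0 else p (n - 1)))
    (k : ℕ) :
    ∏ j ∈ Finset.range k, (Polynomial.X - Polynomial.C ((j:ℂ) * (α - β))) =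
      ∑ m ∈ Finset.range (k+1), Polynomial.C (T σ α β k m) * p m := by
  induction k with
  | zero => simp [T, hp0]
  | succ k ih =>
    rw [Finset.prod_range_succ, ih]
    -- RHS: expand via t_rec and split
    have hR : ∑ m ∈ Finset.range (k+1+1), Polynomial.C (T σ α β (k+1) m) * p m
        = (∑ m ∈ Finset.range (k+1), Polynomial.C (T σ α β k m) * p (m+1))
          + (∑ m ∈ Finset.range (k+1),
              Polynomial.C (T σ α β k m * (((α+β)*(m:ℂ) + (σ:ℂ)/α) - (k:ℂ)*(α-β))) * p m)
          + (∑ m ∈ Finset.range (k+1),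
              Polynomial.C (T σ α β k (m+1) *
                ((σ:ℂ) * ((m+1 : ℕ):ℂ) + α*β*((m+1:ℕ):ℂ)*(((m+1:ℕ):ℂ) - 1))) * p m) := by
      have h1 : ∀ m ∈ Finset.range (k+1+1), Polynomial.C (T σ α β (k+1) m) * p m
          = (if m = 0 then 0 else Polynomial.C (T σ α β k (m-1)) * p m)
            + Polynomial.C (T σ α β k m * (((α+β)*(m:ℂ) + (σ:ℂ)/α) - (k:ℂ)*(α-β))) * p m
            + Polynomial.C (T σ α β k (m+1) *
                ((σ:ℂ) * ((m+1 : ℕ):ℂ) + α*β*((m+1:ℕ):ℂ)*(((m+1:ℕ):ℂ) - 1))) * p m := by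
        intro m _
        rw [t_rec σ α β hα k m]
        rcases em (m = 0) with h | h <;> simp [h, Polynomial.C_mul] <;> ring
      rw [Finset.sum_congr rfl h1]
      rw [Finset.sum_add_distrib, Finset.sum_add_distrib]
      congr 1
      · congr 1
        · -- ite sum = shifted sum
          rw [Finset.sum_range_succ' (fun m => if m = 0 then 0 else Polynomial.C (T σ α β k (m-1)) * p m) (k+1)]
          simp
        · -- extend: drop last term which is zero
          rw [Finset.sum_range_succ]
          rw [T_zero σ α β (Nat.lt_succ_self k)]
          simp
      · rw [Finset.sum_range_succ]
        rw [T_zero σ α β (show k < k+1+1 by omega)]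
        simp
    rw [hR]
    -- LHS: expand product
    have hL : (∑ m ∈ Finset.range (k+1), Polynomial.C (T σ α β k m) * p m) *
          (Polynomial.X - Polynomial.C ((k:ℂ) * (α - β)))
        = (∑ m ∈ Finset.range (k+1), Polynomial.C (T σ α β k m) * p (m+1))
          + (∑ m ∈ Finset.range (k+1),
              Polynomial.C (T σ α β k m * (((α+β)*(m:ℂ) + (σ:ℂ)/α) - (k:ℂ)*(α-β))) * p m)
          + (∑ m ∈ Finset.range (k+1),
              Polynomial.C (T σ α β k m * ((σ:ℂ) * (m:ℂ) + α*β*(m:ℂ)*((m:ℂ) - 1))) *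
                (if m = 0 then 0 else p (m-1))) := by
      rw [Finset.sum_mul, ← Finset.sum_add_distrib, ← Finset.sum_add_distrib]
      refine Finset.sum_congr rfl fun m _ => ?_
      have hx : Polynomial.C (T σ α β k m) * p m * (Polynomial.X - Polynomial.C ((k:ℂ) * (α - β)))
          = Polynomial.C (T σ α β k m) * (Polynomial.X * p m)
            - Polynomial.C (T σ α β k m * ((k:ℂ)*(α-β))) * p m := by
        simp only [Polynomial.C_sub, Polynomial.C_add, Polynomial.C_mul]; ring
      rw [hx, hrec m]
      simp only [Polynomial.C_sub, Polynomial.C_add, Polynomial.C_mul]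
      push_cast
      ring
    rw [hL]
    -- match the third sums
    congr 1
    rw [Finset.sum_range_succ' _ k, Finset.sum_range_succ]
    rw [T_zero σ α β (Nat.lt_succ_self k)]
    simp

private lemma Snn_eq_one (S : ℕ → ℕ → ℂ) (n : ℕ) (hn : 1 ≤ n)
    (hS : ∀ z : ℂ, z ^ n = ∑ k ∈ Finset.Icc 1 n, S n k * ∏ j ∈ Finset.range k, (z - j)) :
    S n n = 1 := by
  have hpoly : (Polynomial.X ^ n : Polynomial ℂ)
      = ∑ k ∈ Finset.Icc 1 n, Polynomial.C (S n k) * ∏ j ∈ Finset.range k, (Polynomial.X - Polynomial.C (j:ℂ)) := by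
    apply Polynomial.funext
    intro z
    simp only [Polynomial.eval_pow, Polynomial.eval_X, Polynomial.eval_finset_sum,
      Polynomial.eval_mul, Polynomial.eval_C, Polynomial.eval_prod, Polynomial.eval_sub]
    exact hS z
  have hmon : ∀ k : ℕ, (∏ j ∈ Finset.range k, (Polynomial.X - Polynomial.C (j:ℂ))).Monic :=
    fun k => Polynomial.monic_prod_of_monic _ _ fun j _ => Polynomial.monic_X_sub_C _
  have hdeg : ∀ k : ℕ, (∏ j ∈ Finset.range k, (Polynomial.X - Polynomial.C (j:ℂ))).natDegree = k := by
    intro k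
    rw [Polynomial.natDegree_prod]
    · simp only [Polynomial.natDegree_X_sub_C, Finset.sum_const, Finset.card_range, smul_eq_mul, mul_one]
    · intro j _; exact (Polynomial.monic_X_sub_C _).ne_zero
  have hco := congrArg (fun q : Polynomial ℂ => q.coeff n) hpoly
  simp only [Polynomial.coeff_X_pow, if_pos rfl, Polynomial.finset_sum_coeff,
    Polynomial.coeff_C_mul] at hco
  rw [Finset.sum_eq_single n] at hco
  · have h1 : (∏ j ∈ Finset.range n, (Polynomial.X - Polynomial.C (j:ℂ))).coeff n = 1 := by
      have h2 := (hmon n).coeff_natDegree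
      rwa [hdeg n] at h2
    rw [h1] at hco
    simpa using hco.symm
  · intro k hk hkn
    have hklt : k < n := lt_of_le_of_ne (Finset.mem_Icc.mp hk).2 hkn
    rw [Polynomial.coeff_eq_zero_of_natDegree_lt (by rw [hdeg]; exact hklt)]
    ring
  · intro h; exact absurd (Finset.mem_Icc.mpr ⟨hn, le_refl n⟩) h

theorem stmt_10 (σ : ℝ) (hσ : 0 < σ) (α β : ℂ) (hα : α ≠ 0) (hβ : β ≠ 0)
    (p : ℕ → Polynomial ℂ) (hp0 : p 0 = 1)
    (hrec : ∀ n : ℕ, Polynomial.X * p n =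
      p (n + 1) + Polynomial.C ((α + β) * n + σ / α) * p n
        + Polynomial.C (σ * n + α * β * n * (n - 1)) * (if n = 0 then 0 else p (n - 1)))
    (Φ : Polynomial ℂ →ₗ[ℂ] ℂ) (hΦ1 : Φ 1 = 1) (hΦ : ∀ n, 1 ≤ n → Φ (p n) = 0)
    (S : ℕ → ℕ → ℂ)
    (hS : ∀ n, 1 ≤ n → ∀ z : ℂ,
      z ^ n = ∑ k ∈ Finset.Icc 1 n, S n k * ∏ j ∈ Finset.range k, (z - j))
    (n : ℕ) (hn : 1 ≤ n) :
    Φ (Polynomial.X ^ n) =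
      ∑ k ∈ Finset.Icc 1 n, (α - β) ^ (n - k) * S n k *
        ∏ j ∈ Finset.range k, ((σ : ℂ) / α + j * β) := by
  classical
  have hCmul : ∀ (c : ℂ) (q : Polynomial ℂ), Φ (Polynomial.C c * q) = c * Φ q := by
    intro c q
    rw [← Polynomial.smul_eq_C_mul, map_smul, smul_eq_mul]
  -- Φ of the generalized factorial polynomials
  have hq : ∀ k : ℕ, Φ (∏ j ∈ Finset.range k, (Polynomial.X - Polynomial.C ((j:ℂ) * (α - β))))
      = ∏ j ∈ Finset.range k, ((σ : ℂ) / α + j * β) := by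
    intro k
    rw [expand_q σ α β hα p hp0 hrec k, map_sum, Finset.sum_range_succ']
    have h1 : ∀ m ∈ Finset.range k, Φ (Polynomial.C (T σ α β k (m+1)) * p (m+1)) = 0 := by
      intro m _
      rw [hCmul, hΦ (m+1) (Nat.succ_le_succ (Nat.zero_le m)), mul_zero]
    rw [Finset.sum_congr rfl h1]
    rw [hp0, hCmul, hΦ1]
    simp only [Finset.sum_const_zero, zero_add, mul_one, T, Nat.choose_zero_right,
      Nat.cast_one, one_mul]
    rw [Finset.range_eq_Ico]
  -- the key polynomial identity
  have hXn : (Polynomial.X ^ n : Polynomial ℂ)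
      = ∑ k ∈ Finset.Icc 1 n, Polynomial.C ((α - β) ^ (n - k) * S n k) *
          ∏ j ∈ Finset.range k, (Polynomial.X - Polynomial.C ((j:ℂ) * (α - β))) := by
    by_cases hab : α - β = 0
    · rw [Finset.sum_eq_single n]
      · have h0 : ∀ j : ℕ, (j:ℂ) * (α - β) = 0 := by intro j; rw [hab, mul_zero]
        have : (∏ j ∈ Finset.range n, (Polynomial.X - Polynomial.C ((j:ℂ) * (α - β))))
            = Polynomial.X ^ n := by
          simp [h0]
        rw [this, hab, Nat.sub_self, pow_zero, one_mul, Snn_eq_one S n hn (hS n hn), Polynomial.C_1, one_mul]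
      · intro k hk hkn
        have hklt : k < n := lt_of_le_of_ne (Finset.mem_Icc.mp hk).2 hkn
        rw [hab, zero_pow (Nat.sub_ne_zero_of_lt hklt), zero_mul, Polynomial.C_0, zero_mul]
      · intro h; exact absurd (Finset.mem_Icc.mpr ⟨hn, le_refl n⟩) h
    · apply Polynomial.funext
      intro z
      simp only [Polynomial.eval_pow, Polynomial.eval_X, Polynomial.eval_finset_sum,
        Polynomial.eval_mul, Polynomial.eval_C, Polynomial.eval_prod, Polynomial.eval_sub]
      have h := hS n hn (z / (α - β))
      have h2 : z ^ n = (α - β) ^ n * (z / (α - β)) ^ n := by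
        rw [div_pow, mul_div_cancel₀]
        exact pow_ne_zero n hab
      rw [h2, h, Finset.mul_sum]
      refine Finset.sum_congr rfl fun k hk => ?_
      have hkn : k ≤ n := (Finset.mem_Icc.mp hk).2
      have h3 : (α - β) ^ n = (α - β) ^ (n - k) * (α - β) ^ k := by
        rw [← pow_add, Nat.sub_add_cancel hkn]
      have h4 : (α - β) ^ k * ∏ j ∈ Finset.range k, (z / (α - β) - (j:ℂ))
          = ∏ j ∈ Finset.range k, (z - (j:ℂ) * (α - β)) := by
        calc (α - β) ^ k * ∏ j ∈ Finset.range k, (z / (α - β) - (j:ℂ))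
            = ∏ j ∈ Finset.range k, ((α - β) * (z / (α - β) - (j:ℂ))) := by
              rw [Finset.prod_mul_distrib, Finset.prod_const, Finset.card_range]
          _ = ∏ j ∈ Finset.range k, (z - (j:ℂ) * (α - β)) := by
              refine Finset.prod_congr rfl fun j _ => ?_
              field_simp
      calc (α - β) ^ n * (S n k * ∏ j ∈ Finset.range k, (z / (α - β) - (j:ℂ)))
          = (α - β) ^ (n - k) * S n k * ((α - β) ^ k * ∏ j ∈ Finset.range k, (z / (α - β) - (j:ℂ))) := by
            rw [h3]; ring
        _ = (α - β) ^ (n - k) * S n k * ∏ j ∈ Finset.range k, (z - (j:ℂ) * (α - β)) := by rw [h4]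
  rw [hXn, map_sum]
  refine Finset.sum_congr rfl fun k hk => ?_
  rw [hCmul, hq k]
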